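/- Let A be a unital complex Banach algebra. An element a ∈ A has a generalized Drazin inverse if and only if there exists b ∈ A commuting with a and m ∈ ℕ such that (ab - (ab)²)^m = 0 and a - a²b is quasinilpotent. -/

import Mathlib

open Polynomial ENNReal Filter Topology

/-- `q` is quasinilpotent: `1 + q*y` is invertible for every `y` commuting with `q`. -/
def IsQuasinilpotent {A : Type*} [Ring A] (q : A) : Prop :=
  ∀ y : A, q * y = y * q → IsUnit (1 + q * y)

/-- `x` is a generalized Drazin inverse of `a`. -/
def IsGDrazinInverse {A : Type*} [Ring A] (a x : A) : Prop :=
  x = x * a * x ∧ a * x = x * a ∧ IsQuasinilpotent (a - a * a * x)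

section Lemmas
variable {A : Type*} [NormedRing A] [NormedAlgebra ℂ A] [CompleteSpace A]

lemma spec_subset_of_qn {q : A} (h : IsQuasinilpotent q) : spectrum ℂ q ⊆ {0} := by
  intro k hk
  by_contra hk0
  have hk0 : k ≠ 0 := hk0
  have hy : q * algebraMap ℂ A (-k⁻¹) = algebraMap ℂ A (-k⁻¹) * q :=
    (Algebra.commutes _ _).symm
  have hu := h _ hy
  have h1 : algebraMap ℂ A k * (1 + q * algebraMap ℂ A (-k⁻¹)) = algebraMap ℂ A k - q := by
    rw [mul_add, mul_one, ← mul_assoc, Algebra.commutes k q, mul_assoc, ← map_mul]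
    have : k * (-k⁻¹) = -1 := by field_simp
    rw [this, map_neg, map_one, mul_neg_one, ← sub_eq_add_neg]
  have : IsUnit (algebraMap ℂ A k - q) := by
    rw [← h1]
    exact ((isUnit_iff_ne_zero.mpr hk0).map (algebraMap ℂ A)).mul hu
  exact spectrum.mem_iff.mp hk this

lemma radius_zero_of_spec {q : A} (h : spectrum ℂ q ⊆ {0}) : spectralRadius ℂ q = 0 := by
  refine le_antisymm ?_ bot_le
  refine iSup₂_le fun k hk => ?_
  have : k = 0 := h hk
  simp [this]

lemma radius_mul_zero {q y : A} (hq : spectralRadius ℂ q = 0) (hy : Commute q y) :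
    spectralRadius ℂ (q * y) = 0 := by
  have hT : Tendsto (fun n : ℕ => (‖q ^ n‖₊ : ℝ≥0∞) ^ (1 / n : ℝ) * (‖y‖₊ : ℝ≥0∞))
      atTop (𝓝 0) := by
    have := (spectrum.pow_nnnorm_pow_one_div_tendsto_nhds_spectralRadius q)
    rw [hq] at this
    simpa using ENNReal.Tendsto.mul_const this (Or.inr ENNReal.coe_ne_top)
  have hle : ∀ᶠ n : ℕ in atTop, (‖(q * y) ^ n‖₊ : ℝ≥0∞) ^ (1 / n : ℝ) ≤
      (‖q ^ n‖₊ : ℝ≥0∞) ^ (1 / n : ℝ) * (‖y‖₊ : ℝ≥0∞) := by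
    filter_upwards [eventually_ge_atTop 1] with n hn
    have h1 : (q * y) ^ n = q ^ n * y ^ n := hy.mul_pow n
    have h2 : ‖(q * y) ^ n‖₊ ≤ ‖q ^ n‖₊ * ‖y‖₊ ^ n := by
      rw [h1]
      exact (nnnorm_mul_le _ _).trans (mul_le_mul_right (nnnorm_pow_le' y hn) _)
    have hn' : (n : ℝ) ≠ 0 := by positivity
    calc (‖(q * y) ^ n‖₊ : ℝ≥0∞) ^ (1 / n : ℝ)
        ≤ ((‖q ^ n‖₊ : ℝ≥0∞) * (‖y‖₊ : ℝ≥0∞) ^ (n : ℕ)) ^ (1 / n : ℝ) := by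
          refine ENNReal.rpow_le_rpow ?_ (by positivity)
          exact_mod_cast h2
      _ = (‖q ^ n‖₊ : ℝ≥0∞) ^ (1 / n : ℝ) * (‖y‖₊ : ℝ≥0∞) := by
          rw [ENNReal.mul_rpow_of_nonneg _ _ (by positivity), ← ENNReal.rpow_natCast,
            ← ENNReal.rpow_mul, mul_one_div, div_self hn', ENNReal.rpow_one]
  have hlim : Tendsto (fun n : ℕ => (‖(q * y) ^ n‖₊ : ℝ≥0∞) ^ (1 / n : ℝ)) atTop
      (𝓝 (spectralRadius ℂ (q * y))) :=
    spectrum.pow_nnnorm_pow_one_div_tendsto_nhds_spectralRadius (q * y)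
  exact le_antisymm (le_of_tendsto_of_tendsto hlim hT hle) bot_le

lemma qn_of_spec {q : A} (h : spectrum ℂ q ⊆ {0}) : IsQuasinilpotent q := by
  intro y hy
  have hr : spectralRadius ℂ (q * y) = 0 := radius_mul_zero (radius_zero_of_spec h) hy
  have hspec : spectrum ℂ (q * y) ⊆ {0} := by
    intro k hk
    have hle : (‖k‖₊ : ℝ≥0∞) ≤ spectralRadius ℂ (q * y) :=
      le_iSup₂ (f := fun (k : ℂ) (_ : k ∈ spectrum ℂ (q * y)) => (‖k‖₊ : ℝ≥0∞)) k hk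
    rw [hr, le_zero_iff] at hle
    have : ‖k‖₊ = 0 := by exact_mod_cast hle
    simpa using (nnnorm_eq_zero.mp this)
  have hmem : (-1 : ℂ) ∉ spectrum ℂ (q * y) := fun h' => by simpa using hspec h'
  rw [spectrum.notMem_iff] at hmem
  have := hmem.neg
  have heq : -((algebraMap ℂ A) (-1) - q * y) = 1 + q * y := by
    rw [map_neg, map_one]; abel
  rwa [heq] at this

lemma qn_add_nilpotent {q n : A} (hq : IsQuasinilpotent q) (hn : IsNilpotent n)
    (hc : Commute q n) : IsQuasinilpotent (q + n) := by
  apply qn_of_spec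
  intro k hk
  by_contra hk0
  have hk0 : k ≠ 0 := hk0
  have hu : IsUnit (algebraMap ℂ A k - q) :=
    spectrum.notMem_iff.mp fun hmem => hk0 (spec_subset_of_qn hq hmem)
  have hcn : Commute n (algebraMap ℂ A k) :=
    (Algebra.commutes k n : Commute (algebraMap ℂ A k) n).symm
  have hcomm : Commute (-n) (algebraMap ℂ A k - q) := (hcn.sub_right hc.symm).neg_left
  have hiu := (hn.neg).isUnit_add_left_of_commute hu hcomm
  have heq : algebraMap ℂ A k - q + -n = algebraMap ℂ A k - (q + n) := by abel
  exact spectrum.mem_iff.mp hk (heq ▸ hiu)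

lemma commute_aeval {r u : A} (h : Commute r u) (p : ℂ[X]) : Commute r (aeval u p) := by
  induction p using Polynomial.induction_on' with
  | add p q hp hq => rw [map_add]; exact hp.add_right hq
  | monomial n c =>
    rw [aeval_monomial]
    have h1 : Commute r (algebraMap ℂ A c) := Commute.symm (Algebra.commutes c r)
    exact h1.mul_right (h.pow_right n)


end Lemmas

theorem gDrazin_iff_exists_comm_nilpotent_part {A : Type*} [NormedRing A]
    [NormedAlgebra ℂ A] [CompleteSpace A] (a : A) :
    (∃ x : A, IsGDrazinInverse a x) ↔
      ∃ (b : A) (m : ℕ), a * b = b * a ∧ (a * b - (a * b) * (a * b)) ^ m = 0 ∧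
        IsQuasinilpotent (a - a * a * b) := by
  constructor
  · rintro ⟨x, hx1, hx2, hx3⟩
    refine ⟨x, 1, hx2, ?_, hx3⟩
    have h : (a * x) * (a * x) = a * x := by
      conv_lhs => rw [mul_assoc, ← mul_assoc x a x, ← hx1]
    rw [pow_one, h, sub_self]
  · rintro ⟨b, m, hcomm, hnil, hq⟩
    rcases Nat.eq_zero_or_pos m with hm | hm
    · subst hm
      rw [pow_zero] at hnil
      have : Subsingleton A := subsingleton_of_zero_eq_one hnil.symm
      refine ⟨0, Subsingleton.elim _ _, Subsingleton.elim _ _, fun y _ => ?_⟩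
      have h1 : (1 + (a - a * a * 0) * y) = 1 := Subsingleton.elim _ _
      rw [h1]
      exact isUnit_one
    · obtain ⟨k, rfl⟩ : ∃ k, m = k + 1 := ⟨m - 1, (Nat.succ_pred_eq_of_pos hm).symm⟩
      letI R := Algebra.adjoin ℂ ({a, b} : Set A)
      letI : CommRing R := Algebra.adjoinCommRingOfComm ℂ (by
        rintro x hx y hy
        simp only [Set.mem_insert_iff, Set.mem_singleton_iff] at hx hy
        rcases hx with rfl | rfl <;> rcases hy with rfl | rfl
        · rfl
        · exact hcomm
        · exact hcomm.symm
        · rfl)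
      set a' : R := ⟨a, Algebra.subset_adjoin (Set.mem_insert _ _)⟩ with ha'
      set b' : R := ⟨b, Algebra.subset_adjoin (Set.mem_insert_of_mem _ rfl)⟩ with hb'
      obtain ⟨u', hu'⟩ : ∃ x : R, a' * b' = x := ⟨_, rfl⟩
      have hnilR : (u' - u' * u') ^ (k + 1) = 0 := by
        apply Subtype.coe_injective
        rw [← hu']
        push_cast
        exact hnil
      obtain ⟨p, s, hps⟩ : IsCoprime ((X : ℂ[X]) ^ (k + 1)) ((1 - X) ^ (k + 1)) :=
        IsCoprime.pow ⟨1, 1, by ring⟩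
      obtain ⟨P', hP'⟩ : ∃ x : R, aeval u' p = x := ⟨_, rfl⟩
      obtain ⟨S', hS'⟩ : ∃ x : R, aeval u' s = x := ⟨_, rfl⟩
      obtain ⟨d', hd'⟩ : ∃ x : R, u' ^ (k + 1) = x := ⟨_, rfl⟩
      obtain ⟨c', hc'⟩ : ∃ x : R, (1 - u') ^ (k + 1) = x := ⟨_, rfl⟩
      have key : P' * d' + S' * c' = 1 := by
        have h := congrArg (aeval u') hps
        simp only [map_add, map_mul, map_pow, map_one, map_sub, aeval_X] at h
        rw [hP', hS', hd', hc'] at h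
        exact h
      have hzero : d' * c' = 0 := by
        rw [← hd', ← hc', ← mul_pow, mul_one_sub]
        exact hnilR
      have h1e : 1 - P' * d' = S' * c' := by linear_combination -key
      have hidem : (P' * d') * (P' * d') = P' * d' := by
        linear_combination (P' * d') * key - (P' * S') * hzero
      have hidem' : IsIdempotentElem (P' * d') := hidem
      have hnpow : ((1 - u') * (P' * d')) ^ (k + 1) = 0 := by
        rw [mul_pow, hc', hidem'.pow_succ_eq k]
        linear_combination P' * hzero
      obtain ⟨W', hWd⟩ : ∃ w : R, (∑ i ∈ Finset.range (k + 1), ((1 - u') * (P' * d')) ^ i) = w :=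
        ⟨_, rfl⟩
      have hW : (1 - (1 - u') * (P' * d')) * W' = 1 := by
        have h := geom_sum_mul ((1 - u') * (P' * d')) (k + 1)
        rw [hWd, hnpow] at h
        linear_combination -h
      have hen : (P' * d') * ((1 - u') * (P' * d')) = (1 - u') * (P' * d') := by
        linear_combination (1 - u') * hidem
      have hax : a' * (b' * (P' * d') * W') = P' * d' := by
        linear_combination (P' * d' * W') * hu' + (P' * d') * hW + W' * hen
      have hxax : (b' * (P' * d') * W') * a' * (b' * (P' * d') * W') = b' * (P' * d') * W' := by
        linear_combination (b' * (P' * d') * W') * hax + (b' * W') * hidem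
      have hdecomp : a' - a' * a' * (b' * (P' * d') * W') =
          (a' - a' * a' * b') + (a' * (a' * b') - a' * (P' * d')) := by
        linear_combination (-a') * hax
      have h1 : (u' * (1 - P' * d')) ^ (k + 1) = 0 := by
        rw [mul_pow, hd', hidem'.one_sub.pow_succ_eq k]
        linear_combination d' * h1e + S' * hzero
      have hsub : IsNilpotent (u' - P' * d') := by
        rw [show u' - P' * d' = u' * (1 - P' * d') - (1 - u') * (P' * d') by ring]
        exact (Commute.all _ _).isNilpotent_sub ⟨k + 1, h1⟩ ⟨k + 1, hnpow⟩
      have hnil2 : IsNilpotent (a' * (a' * b') - a' * (P' * d')) := by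
        rw [show a' * (a' * b') - a' * (P' * d') = a' * (a' * b' - P' * d') by ring, hu']
        exact (Commute.all _ _).isNilpotent_mul_left hsub
      -- push results to A
      refine ⟨(b' * (P' * d') * W' : R), ?_, ?_, ?_⟩
      · have h := congrArg (Subtype.val) hxax
        push_cast at h ⊢
        exact h.symm
      · have h := congrArg (Subtype.val) (mul_comm a' (b' * (P' * d') * W'))
        push_cast at h ⊢
        exact h
      · have hdecompA : a - a * a * ((b' * (P' * d') * W' : R) : A) =
            (a - a * a * b) + (a * (a * b) - a * ((P' : A) * (d' : A))) := by
          have h := congrArg (Subtype.val) hdecomp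
          push_cast at h ⊢
          exact h
        rw [hdecompA]
        refine qn_add_nilpotent hq ?_ ?_
        · obtain ⟨j, hj⟩ := hnil2
          refine ⟨j, ?_⟩
          have h := congrArg (Subtype.val) hj
          push_cast at h ⊢
          exact h
        · have h := congrArg (Subtype.val)
            (Commute.all (a' - a' * a' * b') (a' * (a' * b') - a' * (P' * d')))
          push_cast at h ⊢
          exact h
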